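/- Consider two constrained optimization problems over z ∈ ℝ^N: (P1) minimize f(z) subject to h_i(z) + β_i(z) ≤ 0 for i = 1..m, and (P2) minimize f(z) subject to h_i(z) + β_i(z*) ≤ 0 where β_i(z*) are constants. Suppose z* is a KKT point of (P2) with multipliers μ ≥ 0, and suppose that for every i with μ_i > 0 the gradient ∇β_i(z*) = 0. Then z* is a KKT point of (P1) with the same multipliers μ. -/

import Mathlib

/-- If `z*` is a KKT point of the fixed-backoff problem (P2)
(minimize `f` s.t. `h i z + β i z* ≤ 0`) with multipliers `μ ≥ 0`, and
`∇(β i) z* = 0` for every `i` with `μ i > 0`, then `z*` is a KKT point of the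
full problem (P1) (minimize `f` s.t. `h i z + β i z ≤ 0`) with the same multipliers. -/
theorem stmt7 {N m : ℕ}
    (f : (Fin N → ℝ) → ℝ) (h β : Fin m → (Fin N → ℝ) → ℝ)
    (hf : Differentiable ℝ f) (hh : ∀ i, Differentiable ℝ (h i))
    (hβd : ∀ i, Differentiable ℝ (β i))
    (zstar : Fin N → ℝ) (μ : Fin m → ℝ)
    -- dual feasibility
    (hμ : ∀ i, 0 ≤ μ i)
    -- primal feasibility (same for (P1) and (P2) since the constants are `β i z*`)
    (hfeas : ∀ i, h i zstar + β i zstar ≤ 0)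
    -- complementary slackness
    (hcs : ∀ i, μ i * (h i zstar + β i zstar) = 0)
    -- stationarity for (P2): the backoffs are constants, so only `∇(h i)` appears
    (hstat2 : fderiv ℝ f zstar + ∑ i, μ i • fderiv ℝ (h i) zstar = 0)
    -- the gradients of active backoff terms vanish
    (hβ0 : ∀ i, 0 < μ i → fderiv ℝ (β i) zstar = 0) :
    -- KKT conditions of (P1) with the same multipliers
    (fderiv ℝ f zstar + ∑ i, μ i • fderiv ℝ (fun z => h i z + β i z) zstar = 0) ∧
    (∀ i, h i zstar + β i zstar ≤ 0) ∧ (∀ i, 0 ≤ μ i) ∧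
    (∀ i, μ i * (h i zstar + β i zstar) = 0) := by
  refine ⟨?_, hfeas, hμ, hcs⟩
  have key : ∀ i, μ i • fderiv ℝ (fun z => h i z + β i z) zstar
      = μ i • fderiv ℝ (h i) zstar := by
    intro i
    rw [fderiv_fun_add ((hh i).differentiableAt) ((hβd i).differentiableAt)]
    rcases lt_or_eq_of_le (hμ i) with hpos | hzero
    · rw [hβ0 i hpos, add_zero]
    · rw [← hzero, zero_smul, zero_smul]
  rw [Finset.sum_congr rfl (fun i _ => key i)]
  exact hstat2
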